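/- Let Σ be a finite nonempty alphabet, P a stochastic language over Σ, and let u_0, u_1, …, u_n ∈ Σ* be words with P(u_iΣ*) > 0 for each i such that the family {u_0^{-1}P, u_1^{-1}P, …, u_n^{-1}P} is linearly independent in the real vector space of functions Σ* → ℝ. Then for μ-almost every ω ∈ Ω there exist ε > 0 and M ∈ ℕ such that for every m ≥ M: P_{ω,m}(u_iΣ*) > 0 for each i ∈ {0,…,n}, and the system I({u_1,…,u_n}, u_0, ω, m, ε) has no solution. -/

import Mathlib

open scoped BigOperators
open MeasureTheory

/-- A stochastic language over the alphabet `A`: a nonnegative real-valued function on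
words whose values are summable with sum `1`. -/
def IsStochastic {A : Type*} (p : List A → ℝ) : Prop :=
  (∀ w, 0 ≤ p w) ∧ HasSum p 1

/-- `pre w` is the set `wΣ*` of words having `w` as a prefix. -/
def pre {A : Type*} (w : List A) : Set (List A) := {v | w <+: v}

/-- The residualLang language `u⁻¹P` of `P` with respect to the word `u`. -/
noncomputable def residualLang {A : Type*} (P : List A → ℝ) (u w : List A) : ℝ :=
  P (u ++ w) / ∑' v : pre u, P (v : List A)

/-- The empirical probability of the set `X` among the first `m` samples of `ω`. -/
noncomputable def emp {A : Type*} (ω : ℕ → List A) (m : ℕ) (X : Set (List A)) : ℝ :=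
  (∑ i ∈ Finset.range m, X.indicator (fun _ => (1 : ℝ)) (ω i)) / m

/-- `x` is a solution of the system `I({u 0, …, u (n-1)}, v, ω, m, ε)`. -/
def IsSolution {A : Type*} {n : ℕ} (u : Fin n → List A) (v : List A)
    (ω : ℕ → List A) (m : ℕ) (ε : ℝ) (x : Fin n → ℝ) : Prop :=
  (∑ i, x i = 1) ∧
    ∀ w : List A, (∃ i < m, w <:+: ω i) →
      |emp ω m (pre (v ++ w)) / emp ω m (pre v) -
          ∑ i, x i * (emp ω m (pre (u i ++ w)) / emp ω m (pre (u i)))| ≤ ε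

/-- Words over a countable alphabet carry the discrete (full) σ-algebra. -/
instance listMeasurableSpace {A : Type*} : MeasurableSpace (List A) := ⊤

/-- `μ` is the infinite i.i.d. product of the law on `List A` given by `P`:
its finite-dimensional cylinder probabilities are the corresponding products. -/
def IsIIDProduct {A : Type*} (P : List A → ℝ) (μ : Measure (ℕ → List A)) : Prop :=
  ∀ (s : Finset ℕ) (E : ℕ → Set (List A)),
    μ {ω | ∀ i ∈ s, ω i ∈ E i} = ∏ i ∈ s, ∑' w : E i, ENNReal.ofReal (P (w : List A))

section Aux
variable {A : Type*}

lemma meas_list (f : List A → ℝ) : Measurable f := fun _ _ => trivial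

lemma measSet_list (s : Set (List A)) : MeasurableSet s := trivial

lemma hone {P : List A → ℝ} {μ : Measure (ℕ → List A)} (hμ : IsIIDProduct P μ)
    (i : ℕ) (E : Set (List A)) :
    μ ((fun ω => ω i) ⁻¹' E) = ∑' w : E, ENNReal.ofReal (P (w : List A)) := by
  have := hμ {i} (fun _ => E)
  simp at this; exact this

lemma prob_of_iid {P : List A → ℝ} {μ : Measure (ℕ → List A)} (hμ : IsIIDProduct P μ) :
    IsProbabilityMeasure μ := by
  constructor
  have := hμ ∅ (fun _ => Set.univ)
  simpa using this

end Aux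

section LLN
variable {A : Type*} {P : List A → ℝ} {μ : Measure (ℕ → List A)}

open Filter Topology ProbabilityTheory

lemma indicator_eval (X : Set (List A)) (i : ℕ) (ω : ℕ → List A) :
    X.indicator (fun _ => (1 : ℝ)) (ω i)
      = ((fun ω : ℕ → List A => ω i) ⁻¹' X).indicator (fun _ => (1 : ℝ)) ω := by
  by_cases h : ω i ∈ X <;> simp [Set.indicator_apply, h]

lemma eval_indepFun (hμ : IsIIDProduct P μ) {i j : ℕ} (hij : i ≠ j) :
    IndepFun (fun ω : ℕ → List A => ω i) (fun ω : ℕ → List A => ω j) μ := by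
  rw [indepFun_iff_measure_inter_preimage_eq_mul]
  intro s t _ _
  have h2 := hμ {i, j} (fun k => if k = i then s else t)
  have hs : {ω : ℕ → List A | ∀ k ∈ ({i, j} : Finset ℕ), ω k ∈ (if k = i then s else t)}
      = (fun ω : ℕ → List A => ω i) ⁻¹' s ∩ (fun ω : ℕ → List A => ω j) ⁻¹' t := by
    ext ω
    simp only [Finset.mem_insert, Finset.mem_singleton, Set.mem_setOf_eq, Set.mem_inter_iff,
      Set.mem_preimage]
    constructor
    · intro h
      have h1 := h i (Or.inl rfl)
      have h2 := h j (Or.inr rfl)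
      rw [if_pos rfl] at h1
      rw [if_neg (by exact fun h => hij h.symm)] at h2
      exact ⟨h1, h2⟩
    · rintro ⟨h1, h2⟩ k hk
      rcases hk with rfl | rfl
      · simpa using h1
      · rw [if_neg (by exact fun h => hij h.symm)]; exact h2
  rw [hs] at h2
  rw [h2, Finset.prod_insert (by simpa using hij), Finset.prod_singleton,
    hone hμ i s, hone hμ j t, if_pos rfl, if_neg (by exact fun h => hij h.symm)]

lemma lln (hμ : IsIIDProduct P μ) (X : Set (List A)) :
    ∀ᵐ ω ∂μ, Tendsto (fun m => emp ω m X) atTop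
      (𝓝 ((∑' w : X, ENNReal.ofReal (P (w : List A))).toReal)) := by
  have pm : IsProbabilityMeasure μ := prob_of_iid hμ
  set Y : ℕ → (ℕ → List A) → ℝ :=
    fun i ω => X.indicator (fun _ => (1 : ℝ)) (ω i) with hY
  have hYmeas : ∀ i, Measurable (Y i) := fun i =>
    (meas_list (X.indicator fun _ => (1:ℝ))).comp (measurable_pi_apply i)
  have hYeq : ∀ i, Y i = ((fun ω : ℕ → List A => ω i) ⁻¹' X).indicator (fun _ => (1 : ℝ)) :=
    fun i => funext fun ω => indicator_eval X i ω
  have hint : Integrable (Y 0) μ := by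
    rw [hYeq 0]
    rw [integrable_indicator_iff (measurable_pi_apply 0 (measSet_list X))]
    exact integrableOn_const (measure_lt_top μ _).ne
  have hindep : Pairwise (Function.onFun (IndepFun · · μ) Y) := by
    intro i j hij
    have := (eval_indepFun hμ hij).comp
      (meas_list (X.indicator fun _ => (1:ℝ))) (meas_list (X.indicator fun _ => (1:ℝ)))
    exact this
  have hident : ∀ i, IdentDistrib (Y i) (Y 0) μ μ := by
    intro i
    refine ⟨(hYmeas i).aemeasurable, (hYmeas 0).aemeasurable, ?_⟩
    refine Measure.ext fun s hs => ?_
    rw [Measure.map_apply (hYmeas i) hs, Measure.map_apply (hYmeas 0) hs]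
    rw [hYeq i, hYeq 0]
    have : ∀ j : ℕ, (((fun ω : ℕ → List A => ω j) ⁻¹' X).indicator
        (fun _ => (1 : ℝ))) ⁻¹' s
        = (fun ω : ℕ → List A => ω j) ⁻¹' (X.indicator (fun _ => (1:ℝ)) ⁻¹' s) := by
      intro j
      ext ω
      simp only [Set.mem_preimage, ← indicator_eval]
    rw [this i, this 0, hone hμ, hone hμ]
  have hexp : μ[Y 0] = (∑' w : X, ENNReal.ofReal (P (w : List A))).toReal := by
    rw [hYeq 0, integral_indicator_const (1 : ℝ) (measurable_pi_apply 0 (measSet_list X)),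
      smul_eq_mul, mul_one, measureReal_def, hone hμ]
  have := strong_law_ae_real Y hint hindep hident
  rw [hexp] at this
  filter_upwards [this] with ω hω
  exact hω

end LLN

section Q
open scoped ENNReal
variable {A : Type*} {P : List A → ℝ}

/-- The ENNReal mass of a set of words. -/
noncomputable def qe (P : List A → ℝ) (X : Set (List A)) : ℝ≥0∞ :=
  ∑' w : X, ENNReal.ofReal (P (w : List A))

/-- The real mass of a set of words. -/
noncomputable def q (P : List A → ℝ) (X : Set (List A)) : ℝ := (qe P X).toReal

lemma qe_eq_tsum (hP : IsStochastic P) (X : Set (List A)) :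
    qe P X = ENNReal.ofReal (∑' w : X, P (w : List A)) := by
  rw [ENNReal.ofReal_tsum_of_nonneg (f := fun w : X => P (w : List A))
    (fun w => hP.1 w) (hP.2.summable.subtype X)]
  rfl

lemma q_eq_tsum (hP : IsStochastic P) (X : Set (List A)) :
    q P X = ∑' w : X, P (w : List A) := by
  rw [q, qe_eq_tsum hP, ENNReal.toReal_ofReal]
  exact tsum_nonneg fun w => hP.1 w

lemma qe_ne_top (hP : IsStochastic P) (X : Set (List A)) : qe P X ≠ ⊤ := by
  rw [qe_eq_tsum hP]; exact ENNReal.ofReal_ne_top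

lemma q_nonneg (P : List A → ℝ) (X : Set (List A)) : 0 ≤ q P X :=
  ENNReal.toReal_nonneg

lemma qe_eq_measure {μ : Measure (ℕ → List A)} (hμ : IsIIDProduct P μ) (X : Set (List A)) :
    qe P X = μ.map (fun ω => ω 0) X := by
  rw [Measure.map_apply (measurable_pi_apply 0) (measSet_list X), hone hμ 0 X, qe]

lemma q_mono (hP : IsStochastic P) {μ : Measure (ℕ → List A)} (hμ : IsIIDProduct P μ)
    {X Y : Set (List A)} (hXY : X ⊆ Y) : q P X ≤ q P Y := by
  unfold q
  rw [qe_eq_measure hμ, qe_eq_measure hμ]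
  exact ENNReal.toReal_mono ((qe_eq_measure hμ Y) ▸ qe_ne_top hP Y) (measure_mono hXY)

end Q

section Decomp
open scoped ENNReal
variable {A : Type*} [Fintype A] {P : List A → ℝ}

omit [Fintype A] in
lemma pre_decomp (v : List A) :
    pre v = {v} ∪ ⋃ a : A, pre (v ++ [a]) := by
  ext w
  simp only [pre, Set.mem_setOf_eq, Set.mem_union, Set.mem_singleton_iff, Set.mem_iUnion]
  constructor
  · rintro ⟨t, rfl⟩
    rcases t with _ | ⟨a, t⟩
    · left; simp
    · right; exact ⟨a, t, by simp⟩
  · rintro (rfl | ⟨a, t, rfl⟩)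
    · exact ⟨[], by simp⟩
    · exact ⟨[a] ++ t, by simp⟩

lemma qe_singleton (hP : IsStochastic P) (v : List A) :
    qe P {v} = ENNReal.ofReal (P v) := by
  rw [qe_eq_tsum hP]
  congr 1
  exact tsum_eq_single (⟨v, rfl⟩ : ({v} : Set (List A)))
    (fun b hb => absurd (Subtype.ext (b.2 : (b : List A) = v) : b = ⟨v, rfl⟩) hb)

lemma q_decomp (hP : IsStochastic P) {μ : Measure (ℕ → List A)} (hμ : IsIIDProduct P μ)
    (v : List A) :
    q P (pre v) = P v + ∑ a : A, q P (pre (v ++ [a])) := by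
  have hdisj1 : Disjoint ({v} : Set (List A)) (⋃ a : A, pre (v ++ [a])) := by
    rw [Set.disjoint_left]
    rintro w rfl hw
    simp only [Set.mem_iUnion, pre, Set.mem_setOf_eq] at hw
    obtain ⟨a, h⟩ := hw
    have := h.length_le
    simp at this
  have hdisj2 : Pairwise (Function.onFun Disjoint fun a : A => pre (v ++ [a])) := by
    intro a b hab
    rw [Function.onFun, Set.disjoint_left]
    rintro w hwa hwb
    simp only [pre, Set.mem_setOf_eq] at hwa hwb
    obtain ⟨s, rfl⟩ := hwa
    obtain ⟨t, ht⟩ := hwb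
    rw [List.append_assoc, List.append_assoc] at ht
    have := List.append_cancel_left ht
    simp at this
    exact hab this.1.symm
  have key : qe P (pre v) = qe P {v} + ∑ a : A, qe P (pre (v ++ [a])) := by
    rw [qe_eq_measure hμ, qe_eq_measure hμ]
    rw [pre_decomp v]
    rw [measure_union hdisj1 (measSet_list _),
      measure_iUnion hdisj2 (fun a => measSet_list _), tsum_fintype]
    rw [← qe_eq_measure hμ ({v} : Set (List A))]
    congr 1
    exact Finset.sum_congr rfl fun a _ => (qe_eq_measure hμ _).symm
  rw [q, key, ENNReal.toReal_add (by rw [qe_singleton hP]; exact ENNReal.ofReal_ne_top)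
      (by
        refine (ENNReal.sum_lt_top.2 fun a _ => ?_).ne
        exact (qe_ne_top hP _).lt_top),
    qe_singleton hP, ENNReal.toReal_ofReal (hP.1 v), ENNReal.toReal_sum
      (fun a _ => qe_ne_top hP _)]
  rfl

end Decomp

section Transfer
variable {A : Type*} [Fintype A] {P : List A → ℝ}

lemma g_linearIndependent (hP : IsStochastic P) {μ : Measure (ℕ → List A)}
    (hμ : IsIIDProduct P μ) {k : ℕ} (u : Fin k → List A)
    (hind : LinearIndependent ℝ fun i : Fin k => residualLang P (u i)) :
    LinearIndependent ℝ
      (fun i : Fin k => fun w : List A =>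
        q P (pre (u i ++ w)) / q P (pre (u i))) := by
  rw [Fintype.linearIndependent_iff] at hind ⊢
  intro c hc
  have hcw : ∀ w : List A, ∑ i, c i * (q P (pre (u i ++ w)) / q P (pre (u i))) = 0 := by
    intro w
    have := congrFun hc w
    simpa using this
  refine hind c ?_
  funext w
  have key : ∀ i : Fin k, residualLang P (u i) w
      = q P (pre (u i ++ w)) / q P (pre (u i))
        - ∑ a : A, q P (pre (u i ++ (w ++ [a]))) / q P (pre (u i)) := by
    intro i
    have hd := q_decomp hP hμ (u i ++ w)
    have hF : P (u i ++ w)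
        = q P (pre (u i ++ w)) - ∑ a : A, q P (pre (u i ++ (w ++ [a]))) := by
      rw [eq_sub_iff_add_eq, hd]
      congr 1
      exact Finset.sum_congr rfl fun a _ => by rw [List.append_assoc]
    rw [residualLang, ← q_eq_tsum hP, hF, sub_div, Finset.sum_div]
  have : ∑ i, c i • residualLang P (u i) w
      = ∑ i, c i * (q P (pre (u i ++ w)) / q P (pre (u i)))
        - ∑ a : A, ∑ i, c i * (q P (pre (u i ++ (w ++ [a]))) / q P (pre (u i))) := by
    simp only [smul_eq_mul, key, mul_sub, Finset.mul_sum, Finset.sum_sub_distrib]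
    rw [Finset.sum_comm]
  rw [Finset.sum_apply, Pi.zero_apply]
  simp only [Pi.smul_apply]
  rw [this, hcw w]
  simp only [hcw]
  simp

end Transfer

section LA
variable {A : Type*}

/-- The evaluation functional `c ↦ ∑ i, c i * g i w`. -/
noncomputable def evalFun {k : ℕ} (g : Fin k → List A → ℝ) (w : List A) :
    (Fin k → ℝ) →ₗ[ℝ] ℝ :=
  ∑ i, (g i w) • (LinearMap.proj i : (Fin k → ℝ) →ₗ[ℝ] ℝ)

lemma evalFun_apply {k : ℕ} (g : Fin k → List A → ℝ) (w : List A) (c : Fin k → ℝ) :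
    evalFun g w c = ∑ i, c i * g i w := by
  simp [evalFun, mul_comm]

lemma exists_witness {k : ℕ} (g : Fin k → List A → ℝ)
    (hg : LinearIndependent ℝ g) :
    ∃ (W : Finset (List A)) (C : ℝ), 0 < C ∧ (∀ w ∈ W, ∃ i, g i w ≠ 0) ∧
      ∀ (c : Fin k → ℝ) (b : ℝ), 0 ≤ b →
        (∀ w ∈ W, |∑ i, c i * g i w| ≤ b) → ‖c‖ ≤ C * b := by
  classical
  set K : Finset (List A) → Submodule ℝ (Fin k → ℝ) :=
    fun W => ⨅ w ∈ W, LinearMap.ker (evalFun g w) with hK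
  have hmemK : ∀ (W : Finset (List A)) (c : Fin k → ℝ),
      c ∈ K W ↔ ∀ w ∈ W, ∑ i, c i * g i w = 0 := by
    intro W c
    simp only [hK, Submodule.mem_iInf, LinearMap.mem_ker]
    constructor
    · intro h w hw; rw [← evalFun_apply]; exact h w hw
    · intro h w hw; rw [evalFun_apply]; exact h w hw
  -- descent: find W with K W = ⊥
  have descent : ∀ (d : ℕ) (W : Finset (List A)),
      Module.finrank ℝ (K W) ≤ d → (∀ w ∈ W, ∃ i, g i w ≠ 0) →
      ∃ W' : Finset (List A), (∀ w ∈ W', ∃ i, g i w ≠ 0) ∧ K W' = ⊥ := by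
    intro d
    induction d with
    | zero =>
      intro W hrank hinv
      refine ⟨W, hinv, ?_⟩
      rw [← Submodule.finrank_eq_zero (R := ℝ)]
      omega
    | succ d ih =>
      intro W hrank hinv
      by_cases hbot : K W = ⊥
      · exact ⟨W, hinv, hbot⟩
      · obtain ⟨c, hcK, hc0⟩ := Submodule.exists_mem_ne_zero_of_ne_bot hbot
        have hw : ∃ w : List A, ∑ i, c i * g i w ≠ 0 := by
          by_contra hall
          push_neg at hall
          have : ∑ i, c i • g i = 0 := by
            funext w
            simpa [mul_comm] using hall w
          exact hc0 (funext fun i => (Fintype.linearIndependent_iff.1 hg c this i))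
        obtain ⟨w, hw⟩ := hw
        have hgi : ∃ i, g i w ≠ 0 := by
          by_contra hnone
          push_neg at hnone
          simp [hnone] at hw
        have hlt : K (insert w W) < K W := by
          refine lt_of_le_of_ne ?_ ?_
          · intro c' hc'
            rw [hmemK] at hc' ⊢
            exact fun v hv => hc' v (Finset.mem_insert_of_mem hv)
          · intro heq
            have : c ∈ K (insert w W) := heq ▸ hcK
            rw [hmemK] at this
            exact hw (this w (Finset.mem_insert_self w W))
        have : Module.finrank ℝ (K (insert w W)) < Module.finrank ℝ (K W) :=
          Submodule.finrank_lt_finrank_of_lt hlt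
        refine ih (insert w W) (by omega) ?_
        intro v hv
        rcases Finset.mem_insert.1 hv with rfl | hv
        · exact hgi
        · exact hinv v hv
  obtain ⟨W, hWinv, hWbot⟩ := descent (Module.finrank ℝ (K ∅) + 1) ∅
    (by omega) (by simp)
  -- the restricted map is injective
  set T : (Fin k → ℝ) →ₗ[ℝ] ({x // x ∈ W} → ℝ) :=
    LinearMap.pi (fun w : {x // x ∈ W} => evalFun g (w : List A)) with hT
  have hTinj : Function.Injective T := by
    rw [← LinearMap.ker_eq_bot]
    rw [eq_bot_iff]
    intro c hc
    simp only [LinearMap.mem_ker, hT] at hc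
    have : c ∈ K W := by
      rw [hmemK]
      intro w hw
      have := congrFun hc ⟨w, hw⟩
      rw [LinearMap.pi_apply, evalFun_apply] at this
      exact this
    rw [hWbot] at this
    simpa using this
  set e := LinearEquiv.ofInjective T hTinj with he
  set S := (e.symm.toLinearMap.toContinuousLinearMap :
    LinearMap.range T →L[ℝ] (Fin k → ℝ)) with hS
  refine ⟨W, ‖S‖ + 1, by positivity, hWinv, ?_⟩
  intro c b hb hbound
  have h1 : ‖T c‖ ≤ b := by
    rw [pi_norm_le_iff_of_nonneg hb]
    intro w
    rw [hT, LinearMap.pi_apply, Real.norm_eq_abs, evalFun_apply]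
    exact hbound w w.2
  have h2 : c = S (e c) := by
    rw [hS]
    simp [he]
  calc ‖c‖ = ‖S (e c)‖ := by rw [← h2]
    _ ≤ ‖S‖ * ‖e c‖ := S.le_opNorm _
    _ = ‖S‖ * ‖T c‖ := rfl
    _ ≤ ‖S‖ * b := mul_le_mul_of_nonneg_left h1 (norm_nonneg S)
    _ ≤ (‖S‖ + 1) * b := by nlinarith [norm_nonneg S]

end LA

lemma exists_mem_of_emp_pos {A : Type*} {ω : ℕ → List A} {m : ℕ} {X : Set (List A)}
    (h : 0 < emp ω m X) : ∃ i < m, ω i ∈ X := by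
  by_contra hc
  push_neg at hc
  have : ∑ i ∈ Finset.range m, X.indicator (fun _ => (1 : ℝ)) (ω i) = 0 :=
    Finset.sum_eq_zero fun i hi =>
      Set.indicator_of_notMem (hc i (Finset.mem_range.1 hi)) _
  rw [emp, this, zero_div] at h
  exact lt_irrefl 0 h

open Filter Topology in
theorem statement13 {A : Type*} [Fintype A] [Nonempty A]
    (P : List A → ℝ) (hP : IsStochastic P) {n : ℕ} (u : Fin (n + 1) → List A)
    (hres : ∀ i, 0 < ∑' v : pre (u i), P (v : List A))
    (hind : LinearIndependent ℝ fun i : Fin (n + 1) => residualLang P (u i))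
    (μ : Measure (ℕ → List A)) (hμ : IsIIDProduct P μ) :
    ∀ᵐ ω ∂μ, ∃ ε > (0 : ℝ), ∃ M : ℕ, ∀ m ≥ M,
      (∀ i, 0 < emp ω m (pre (u i))) ∧
      ¬ ∃ x : Fin n → ℝ, IsSolution (fun i : Fin n => u i.succ) (u 0) ω m ε x := by
  classical
  set g : Fin (n + 1) → List A → ℝ :=
    fun i w => q P (pre (u i ++ w)) / q P (pre (u i)) with hgdef
  have hgind : LinearIndependent ℝ g := g_linearIndependent hP hμ u hind
  obtain ⟨W, C, hC, hWinv, hbound⟩ := exists_witness g hgind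
  have hq : ∀ i, 0 < q P (pre (u i)) := fun i => by
    rw [q_eq_tsum hP]; exact hres i
  set F : List A → Set (List A) := fun w => {v | w <:+: v} with hF
  have hqF : ∀ w ∈ W, 0 < q P (F w) := by
    intro w hw
    obtain ⟨i, hgi⟩ := hWinv w hw
    have hnum : 0 < q P (pre (u i ++ w)) := by
      rcases lt_or_eq_of_le (q_nonneg P (pre (u i ++ w))) with h | h
      · exact h
      · exfalso; apply hgi; rw [hgdef]; simp [← h]
    refine lt_of_lt_of_le hnum (q_mono hP hμ ?_)
    intro v hv
    obtain ⟨t, rfl⟩ := hv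
    exact ⟨u i, t, rfl⟩
  -- a.e. convergence events
  have E1 : ∀ᵐ ω ∂μ, ∀ i, Tendsto (fun m => emp ω m (pre (u i))) atTop
      (𝓝 (q P (pre (u i)))) := ae_all_iff.2 fun i => lln hμ _
  have E2 : ∀ᵐ ω ∂μ, ∀ i, ∀ w ∈ W, Tendsto (fun m => emp ω m (pre (u i ++ w))) atTop
      (𝓝 (q P (pre (u i ++ w)))) :=
    ae_all_iff.2 fun i => (ae_ball_iff W.countable_toSet).2 fun w _ => lln hμ _
  have E3 : ∀ᵐ ω ∂μ, ∀ w ∈ W, Tendsto (fun m => emp ω m (F w)) atTop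
      (𝓝 (q P (F w))) :=
    (ae_ball_iff W.countable_toSet).2 fun w _ => lln hμ _
  filter_upwards [E1, E2, E3] with ω h1 h2 h3
  -- constants
  set η : ℝ := 1 / (2 * C * ((n : ℝ) + 1)) with hη
  have hnpos : (0 : ℝ) < (n : ℝ) + 1 := by positivity
  have hηpos : 0 < η := by rw [hη]; positivity
  refine ⟨1 / (4 * C), by positivity, ?_⟩
  -- eventual statements
  have ev1 : ∀ᶠ m in atTop, ∀ i, 0 < emp ω m (pre (u i)) :=
    eventually_all.2 fun i => (h1 i).eventually_const_lt (hq i)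
  have ev2 : ∀ᶠ m in atTop, ∀ i, ∀ w ∈ W,
      |emp ω m (pre (u i ++ w)) / emp ω m (pre (u i)) - g i w| ≤ η := by
    rw [eventually_all]
    intro i
    rw [Filter.eventually_all_finset]
    intro w hw
    have htend : Tendsto (fun m => emp ω m (pre (u i ++ w)) / emp ω m (pre (u i)))
        atTop (𝓝 (g i w)) := (h2 i w hw).div (h1 i) (ne_of_gt (hq i))
    have := htend (Metric.closedBall_mem_nhds (g i w) hηpos)
    filter_upwards [this] with m hm
    simpa [Metric.mem_closedBall, Real.dist_eq] using hm
  have ev3 : ∀ᶠ m in atTop, ∀ w ∈ W, ∃ i < m, w <:+: ω i := by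
    rw [Filter.eventually_all_finset]
    intro w hw
    filter_upwards [(h3 w hw).eventually_const_lt (hqF w hw)] with m hm
    exact exists_mem_of_emp_pos hm
  obtain ⟨M, hM⟩ := eventually_atTop.1 ((ev1.and ev2).and ev3)
  refine ⟨M, fun m hm => ?_⟩
  obtain ⟨⟨hpos, herr⟩, hfact⟩ := hM m hm
  refine ⟨hpos, ?_⟩
  rintro ⟨x, hxsum, hxsol⟩
  set c : Fin (n + 1) → ℝ := Fin.cons 1 (fun i => -x i) with hc
  have hc0 : c 0 = 1 := rfl
  have hcs : ∀ i : Fin n, c i.succ = -x i := fun i => by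
    rw [hc, Fin.cons_succ]
  have hc1 : 1 ≤ ‖c‖ := by
    have := norm_le_pi_norm c 0
    rw [hc0] at this
    simpa using this
  have hxc : ∀ i : Fin n, |x i| ≤ ‖c‖ := by
    intro i
    have := norm_le_pi_norm c i.succ
    rw [hcs i] at this
    simpa using this
  set b : ℝ := 1 / (4 * C) + η * ((n : ℝ) + 1) * ‖c‖ with hb
  have hbnn : 0 ≤ b := by
    have : (0:ℝ) ≤ ‖c‖ := norm_nonneg c
    rw [hb]; positivity
  have key : ∀ w ∈ W, |∑ i, c i * g i w| ≤ b := by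
    intro w hw
    have hsol := hxsol w (hfact w hw)
    set R : Fin (n + 1) → ℝ :=
      fun i => emp ω m (pre (u i ++ w)) / emp ω m (pre (u i)) with hR
    have hsol' : |R 0 - ∑ i : Fin n, x i * R i.succ| ≤ 1 / (4 * C) := hsol
    have hsum : ∑ i, c i * g i w
        = (g 0 w - R 0) + (R 0 - ∑ i : Fin n, x i * R i.succ)
          + ∑ i : Fin n, x i * (R i.succ - g i.succ w) := by
      have expand : ∑ i : Fin n, x i * (R i.succ - g i.succ w)
          = ∑ i : Fin n, x i * R i.succ - ∑ i : Fin n, x i * g i.succ w := by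
        rw [← Finset.sum_sub_distrib]
        exact Finset.sum_congr rfl fun i _ => by ring
      have lhs2 : ∑ i : Fin n, c i.succ * g i.succ w
          = -∑ i : Fin n, x i * g i.succ w := by
        rw [← Finset.sum_neg_distrib]
        exact Finset.sum_congr rfl fun i _ => by rw [hcs]; ring
      rw [Fin.sum_univ_succ, hc0, lhs2, expand]
      ring
    have herr' : ∀ i : Fin (n+1), |R i - g i w| ≤ η := fun i => herr i w hw
    have habs : |∑ i, c i * g i w| ≤ η + 1 / (4 * C) + ∑ i : Fin n, |x i| * η := by
      rw [hsum]
      refine le_trans (abs_add_le _ _) ?_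
      refine add_le_add (le_trans (abs_add_le _ _) (add_le_add ?_ hsol')) ?_
      · rw [abs_sub_comm]; exact herr' 0
      · refine le_trans (Finset.abs_sum_le_sum_abs _ _) ?_
        refine Finset.sum_le_sum fun i _ => ?_
        rw [abs_mul]
        exact mul_le_mul_of_nonneg_left (herr' i.succ) (abs_nonneg _)
    refine le_trans habs ?_
    rw [hb]
    have hsx : ∑ i : Fin n, |x i| * η ≤ (n : ℝ) * ‖c‖ * η := by
      refine le_trans (Finset.sum_le_sum fun i _ =>
        mul_le_mul_of_nonneg_right (hxc i) hηpos.le) ?_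
      rw [Finset.sum_const, Finset.card_univ, Fintype.card_fin, nsmul_eq_mul]
      ring_nf
      exact le_refl _
    have : η ≤ η * ‖c‖ := le_mul_of_one_le_right hηpos.le hc1
    nlinarith [norm_nonneg c, hηpos.le]
  have hfin := hbound c b hbnn key
  have hCη : C * (η * ((n : ℝ) + 1)) = 1 / 2 := by
    rw [hη]; field_simp
  have hCε : C * (1 / (4 * C)) = 1 / 4 := by field_simp
  have h2 : C * (η * ((n : ℝ) + 1) * ‖c‖) = (1 / 2) * ‖c‖ := by
    rw [show C * (η * ((n : ℝ) + 1) * ‖c‖)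
        = (C * (η * ((n : ℝ) + 1))) * ‖c‖ from by ring, hCη]
  rw [hb, mul_add, hCε, h2] at hfin
  linarith [hc1]
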